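/- The function g(r) = (r·coth(r) − 1)/r² is strictly decreasing on (0,∞). -/

import Mathlib

open Real

lemma mono_aux (f f' : ℝ → ℝ) (hf : ∀ x, HasDerivAt f (f' x) x)
    (hpos : ∀ x > (0:ℝ), 0 < f' x) : StrictMonoOn f (Set.Ici 0) := by
  apply strictMonoOn_of_deriv_pos (convex_Ici 0)
  · exact fun x _ => (hf x).continuousAt.continuousWithinAt
  · intro x hx
    rw [interior_Ici] at hx
    rw [(hf x).deriv]
    exact hpos x hx

lemma aux1 {x : ℝ} (hx : 0 < x) : Real.sinh x < x * Real.cosh x := by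
  have hm := mono_aux (fun x => x * Real.cosh x - Real.sinh x) (fun x => x * Real.sinh x)
    (fun x => by
      have h := ((hasDerivAt_id x).mul (Real.hasDerivAt_cosh x)).sub (Real.hasDerivAt_sinh x)
      refine h.congr_deriv ?_
      simp only [id_eq]
      ring)
    (fun x hx => by
      exact mul_pos hx (Real.sinh_pos_iff.2 hx))
  have := hm Set.self_mem_Ici (Set.mem_Ici.2 hx.le) hx
  simp at this
  linarith

lemma aux2 {r : ℝ} (hr : 0 < r) :
    3 * Real.sinh r * Real.cosh r < 2 * r + r * (Real.cosh r ^ 2 + Real.sinh r ^ 2) := by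
  have hm := mono_aux
    (fun x => 2 * x + x * (Real.cosh x ^ 2 + Real.sinh x ^ 2) - 3 * Real.sinh x * Real.cosh x)
    (fun x => 2 + (Real.cosh x ^ 2 + Real.sinh x ^ 2)
      + x * (2 * Real.cosh x * Real.sinh x + 2 * Real.sinh x * Real.cosh x)
      - 3 * (Real.cosh x * Real.cosh x + Real.sinh x * Real.sinh x))
    (fun x => by
      have h1 : HasDerivAt (fun x => Real.cosh x ^ 2 + Real.sinh x ^ 2)
          (2 * Real.cosh x * Real.sinh x + 2 * Real.sinh x * Real.cosh x) x := by
        have := (((Real.hasDerivAt_cosh x).pow 2).add ((Real.hasDerivAt_sinh x).pow 2))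
        refine this.congr_deriv ?_
        push_cast
        ring
      have h2 := (((hasDerivAt_id x).const_mul 2).add ((hasDerivAt_id x).mul h1)).sub
        (((Real.hasDerivAt_sinh x).const_mul 3).mul (Real.hasDerivAt_cosh x))
      refine h2.congr_deriv ?_
      simp only [id_eq]
      ring)
    (fun x hx => by
      have hid : Real.cosh x ^ 2 - Real.sinh x ^ 2 = 1 := Real.cosh_sq_sub_sinh_sq x
      have h1 := aux1 hx
      have hs := Real.sinh_pos_iff.2 hx
      nlinarith [mul_pos hs (sub_pos.2 h1)])
  have := hm Set.self_mem_Ici (Set.mem_Ici.2 hr.le) hr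
  simp at this
  linarith

lemma aux3 {r : ℝ} (hr : 0 < r) :
    2 * Real.sinh r ^ 2 < r ^ 2 + r * Real.sinh r * Real.cosh r := by
  have hm := mono_aux
    (fun x => x ^ 2 + x * Real.sinh x * Real.cosh x - 2 * Real.sinh x ^ 2)
    (fun x => 2 * x + (Real.sinh x + x * Real.cosh x) * Real.cosh x
      + (x * Real.sinh x) * Real.sinh x - 2 * (2 * Real.sinh x * Real.cosh x))
    (fun x => by
      have h2 := ((hasDerivAt_pow 2 x).add
        (((hasDerivAt_id x).mul (Real.hasDerivAt_sinh x)).mul (Real.hasDerivAt_cosh x))).sub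
        (((Real.hasDerivAt_sinh x).pow 2).const_mul 2)
      refine h2.congr_deriv ?_
      simp only [id_eq, Pi.mul_apply]
      push_cast
      ring)
    (fun x hx => by
      have h2 := aux2 hx
      nlinarith)
  have := hm Set.self_mem_Ici (Set.mem_Ici.2 hr.le) hr
  simp at this
  linarith

theorem g_strictAnti :
    StrictAntiOn (fun r : ℝ => (r * (Real.cosh r / Real.sinh r) - 1) / r ^ 2)
      (Set.Ioi (0 : ℝ)) := by
  have hderiv : ∀ r : ℝ, 0 < r → HasDerivAt
      (fun r : ℝ => (r * (Real.cosh r / Real.sinh r) - 1) / r ^ 2)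
      (((1 * (Real.cosh r / Real.sinh r) + r * ((Real.sinh r * Real.sinh r
          - Real.cosh r * Real.cosh r) / Real.sinh r ^ 2)) * r ^ 2
        - (r * (Real.cosh r / Real.sinh r) - 1) * ((2 : ℕ) * r ^ 1)) / (r ^ 2) ^ 2) r := by
    intro r hr
    have hs : Real.sinh r ≠ 0 := ne_of_gt (Real.sinh_pos_iff.2 hr)
    have hc : HasDerivAt (fun r => Real.cosh r / Real.sinh r)
        ((Real.sinh r * Real.sinh r - Real.cosh r * Real.cosh r) / Real.sinh r ^ 2) r :=
      (Real.hasDerivAt_cosh r).div (Real.hasDerivAt_sinh r) hs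
    exact (((hasDerivAt_id r).mul hc).sub_const 1).div (hasDerivAt_pow 2 r)
      (pow_ne_zero 2 (ne_of_gt hr))
  apply strictAntiOn_of_deriv_neg (convex_Ioi 0)
  · exact fun r hr => (hderiv r hr).continuousAt.continuousWithinAt
  · intro r hr
    rw [interior_Ioi] at hr
    rw [Set.mem_Ioi] at hr
    rw [(hderiv r hr).deriv]
    have hs : 0 < Real.sinh r := Real.sinh_pos_iff.2 hr
    have key := aux3 hr
    apply div_neg_of_neg_of_pos
    · have heq : (1 * (Real.cosh r / Real.sinh r) + r * ((Real.sinh r * Real.sinh r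
          - Real.cosh r * Real.cosh r) / Real.sinh r ^ 2)) * r ^ 2
        - (r * (Real.cosh r / Real.sinh r) - 1) * ((2 : ℕ) * r ^ 1)
        = (2 * r * Real.sinh r ^ 2 - r ^ 2 * Real.sinh r * Real.cosh r
            - r ^ 3 * (Real.cosh r ^ 2 - Real.sinh r ^ 2)) / Real.sinh r ^ 2 := by
        field_simp
        linear_combination
      rw [heq, Real.cosh_sq_sub_sinh_sq]
      apply div_neg_of_neg_of_pos _ (pow_pos hs 2)
      nlinarith [mul_pos hr (sub_pos.2 key)]
    · exact pow_pos (pow_pos hr 2) 2
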